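/- arXiv:2503.01188 — 3 statements merged into one kernel-verified Lean document; each statement's English description precedes it below -/
import Mathlib

section
/- Let (X, Y) be an admissible balanced pair in an abelian category A. Then a complex over A is right X-acyclic (i.e., Hom_A(X, −) applied to it is acyclic for every X in the class X) if and only if it is left Y-acyclic (i.e., Hom_A(−, Y) applied to it is acyclic for every Y in Y). -/
open CategoryTheory Category Limits ZeroObject

universe v u

namespace Paper

variable {A : Type u} [Category.{v} A] [Abelian A]

/-- Chain complexes over `A` indexed by `ℤ` (homological convention). -/
abbrev Cx (A : Type u) [Category.{v} A] [Abelian A] := ChainComplex A ℤ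

/-- A chain map is null homotopic if it is homotopic to the zero map. -/
def NullHomotopic {X Y : Cx A} (f : X ⟶ Y) : Prop := Nonempty (Homotopy f 0)

/-- A complex is contractible if its identity is null homotopic. -/
def Contractible (X : Cx A) : Prop := Nonempty (Homotopy (𝟙 X) (0 : X ⟶ X))

/-- `Hom_A(X, E)` is exact at degree `n` for every `X ∈ 𝒳`. -/
def RightAcyclicAt (𝒳 : Set A) (E : Cx A) (n : ℤ) : Prop :=
  ∀ ⦃X : A⦄, X ∈ 𝒳 → ∀ g : X ⟶ E.X n, g ≫ E.d n (n - 1) = 0 →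
    ∃ h : X ⟶ E.X (n + 1), h ≫ E.d (n + 1) n = g

/-- The complex `E` is right `𝒳`-acyclic. -/
def RightAcyclic (𝒳 : Set A) (E : Cx A) : Prop := ∀ n : ℤ, RightAcyclicAt 𝒳 E n

/-- `Hom_A(E, Y)` is exact at (cohomological) degree `n` for every `Y ∈ 𝒴`. -/
def LeftAcyclicAt (𝒴 : Set A) (E : Cx A) (n : ℤ) : Prop :=
  ∀ ⦃Y : A⦄, Y ∈ 𝒴 → ∀ g : E.X n ⟶ Y, E.d (n + 1) n ≫ g = 0 →
    ∃ h : E.X (n - 1) ⟶ Y, E.d n (n - 1) ≫ h = g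

/-- The complex `E` is left `𝒴`-acyclic. -/
def LeftAcyclic (𝒴 : Set A) (E : Cx A) : Prop := ∀ n : ℤ, LeftAcyclicAt 𝒴 E n

/-- `f : X ⟶ M` is a right `𝒳`-approximation of `M`. -/
def IsRightApprox (𝒳 : Set A) {X M : A} (f : X ⟶ M) : Prop :=
  ∀ ⦃X' : A⦄, X' ∈ 𝒳 → ∀ g : X' ⟶ M, ∃ h : X' ⟶ X, h ≫ f = g

/-- `f : M ⟶ Y` is a left `𝒴`-approximation of `M`. -/
def IsLeftApprox (𝒴 : Set A) {M Y : A} (f : M ⟶ Y) : Prop :=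
  ∀ ⦃Y' : A⦄, Y' ∈ 𝒴 → ∀ g : M ⟶ Y', ∃ h : Y ⟶ Y', f ≫ h = g

/-- `R` is an augmented `𝒳`-resolution of `M`:  `⋯ → X₁ → X₀ → M → 0`, with the
`𝒳`-objects placed in degrees `≥ 0` and `M` in degree `-1`. -/
def IsAugXRes (𝒳 : Set A) (M : A) (R : Cx A) : Prop :=
  (∀ n : ℤ, 0 ≤ n → R.X n ∈ 𝒳) ∧ (∀ n : ℤ, n < -1 → IsZero (R.X n)) ∧
    Nonempty (R.X (-1) ≅ M)

/-- `R` is an augmented `𝒴`-coresolution of `M`: `0 → M → Y⁰ → Y¹ → ⋯`, with `M` in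
degree `0` and the `𝒴`-objects in degrees `≤ -1`. -/
def IsAugYCores (𝒴 : Set A) (M : A) (R : Cx A) : Prop :=
  (∀ n : ℤ, n ≤ -1 → R.X n ∈ 𝒴) ∧ (∀ n : ℤ, 0 < n → IsZero (R.X n)) ∧
    Nonempty (R.X 0 ≅ M)

/-- A balanced pair `(𝒳, 𝒴)` of (full additive, isomorphism- and summand-closed)
subcategories of `A`. -/
structure BalancedPair (𝒳 𝒴 : Set A) : Prop where
  isoClosedX : ∀ ⦃X X' : A⦄, X ∈ 𝒳 → (X ≅ X') → X' ∈ 𝒳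
  isoClosedY : ∀ ⦃Y Y' : A⦄, Y ∈ 𝒴 → (Y ≅ Y') → Y' ∈ 𝒴
  summandClosedX : ∀ ⦃X S : A⦄, X ∈ 𝒳 → ∀ (s : S ⟶ X) (r : X ⟶ S), s ≫ r = 𝟙 S → S ∈ 𝒳
  summandClosedY : ∀ ⦃Y S : A⦄, Y ∈ 𝒴 → ∀ (s : S ⟶ Y) (r : Y ⟶ S), s ≫ r = 𝟙 S → S ∈ 𝒴
  contravariantlyFinite : ∀ M : A, ∃ X ∈ 𝒳, ∃ f : X ⟶ M, IsRightApprox 𝒳 f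
  covariantlyFinite : ∀ M : A, ∃ Y ∈ 𝒴, ∃ f : M ⟶ Y, IsLeftApprox 𝒴 f
  resolution : ∀ M : A, ∃ R : Cx A, IsAugXRes 𝒳 M R ∧ RightAcyclic 𝒳 R ∧ LeftAcyclic 𝒴 R
  coresolution : ∀ M : A, ∃ R : Cx A, IsAugYCores 𝒴 M R ∧ RightAcyclic 𝒳 R ∧ LeftAcyclic 𝒴 R

/-- The balanced pair `(𝒳, 𝒴)` is admissible: every right `𝒳`-approximation is epic and
every left `𝒴`-approximation is monic. -/
def Admissible (𝒳 𝒴 : Set A) : Prop :=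
  (∀ ⦃X M : A⦄, X ∈ 𝒳 → ∀ f : X ⟶ M, IsRightApprox 𝒳 f → Epi f) ∧
  (∀ ⦃M Y : A⦄, Y ∈ 𝒴 → ∀ f : M ⟶ Y, IsLeftApprox 𝒴 f → Mono f)

/-- A short exact sequence of `A` belonging to the exact structure `E` induced by `𝒳`:
it is exact and remains exact after applying `Hom_A(X, -)` for every `X ∈ 𝒳`. -/
def EExact (𝒳 : Set A) {D W C : A} (i : D ⟶ W) (p : W ⟶ C) : Prop :=
  ∃ w : i ≫ p = 0, (ShortComplex.mk i p w).ShortExact ∧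
    ∀ ⦃X : A⦄, X ∈ 𝒳 → ∀ g : X ⟶ C, ∃ h : X ⟶ W, h ≫ p = g

/-- A short exact sequence of complexes which is degreewise in `E`. -/
def ChEExact (𝒳 : Set A) {D W C : Cx A} (i : D ⟶ W) (p : W ⟶ C) : Prop :=
  ∀ n : ℤ, EExact 𝒳 (i.f n) (p.f n)

/-- Vanishing of `Ext¹` in the exact category `Ch(A, E)`: every admissible short exact
sequence `0 → D → W → C → 0` in `Ch(A, E)` splits. -/
def Ext1ChVanish (𝒳 : Set A) (C D : Cx A) : Prop :=
  ∀ ⦃W : Cx A⦄ (i : D ⟶ W) (p : W ⟶ C), ChEExact 𝒳 i p → ∃ r : W ⟶ D, i ≫ r = 𝟙 D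

/-- The class `Ẽ` of right `𝒳`-acyclic complexes. -/
def Etilde (𝒳 : Set A) : Set (Cx A) := {E | RightAcyclic 𝒳 E}

/-- The class `E-dw X̃` of complexes with all terms in `𝒳`. -/
def dwX (𝒳 : Set A) : Set (Cx A) := {G | ∀ n : ℤ, G.X n ∈ 𝒳}

/-- The class `E-dg X̃`: complexes with terms in `𝒳` such that every chain map to a right
`𝒳`-acyclic complex is null homotopic. -/
def EdgX (𝒳 : Set A) : Set (Cx A) :=
  {G | (∀ n : ℤ, G.X n ∈ 𝒳) ∧ ∀ E ∈ Etilde 𝒳, ∀ f : G ⟶ E, NullHomotopic f}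

/-- The right `Ext¹`-orthogonal class of `E-dw X̃` in `Ch(A, E)`. -/
def dwPerp (𝒳 : Set A) : Set (Cx A) := {C | ∀ G ∈ dwX 𝒳, Ext1ChVanish 𝒳 G C}

/-- The class `X̃_E` of right `𝒳`-acyclic complexes all of whose cycles lie in `𝒳`. -/
def XtildeE (𝒳 : Set A) : Set (Cx A) :=
  {G | RightAcyclic 𝒳 G ∧ ∀ n : ℤ, kernel (G.d n (n - 1)) ∈ 𝒳}

/-- The disk complex `Dⁿ(M)`: `M` in degrees `n` and `n - 1`, identity differential. -/
noncomputable def disk (M : A) (n : ℤ) : Cx A where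
  X k := if k = n ∨ k = n - 1 then M else 0
  d i j :=
    if h : i = n ∧ j = n - 1 then
      eqToHom (by simp [h.1, h.2])
    else 0
  shape i j hij := by
    rw [dif_neg]
    rintro ⟨rfl, rfl⟩
    exact hij (by rw [ComplexShape.down_Rel]; omega)
  d_comp_d' i j k _ _ := by
    by_cases h : j = n ∧ k = n - 1
    · rw [dif_neg (by rintro ⟨-, rfl⟩; omega : ¬(i = n ∧ j = n - 1)), zero_comp]
    · rw [dif_neg h, comp_zero]

/-- The shift `Σᵏ C`, with `(Σᵏ C)ₙ = C_{n-k}` and differential `(-1)ᵏ d`. -/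
@[simps] def shiftC (C : Cx A) (k : ℤ) : Cx A where
  X n := C.X (n - k)
  d i j := (k.negOnePow : ℤ) • C.d (i - k) (j - k)
  shape i j hij := by
    rw [C.shape, smul_zero]
    simp only [ComplexShape.down_Rel] at *
    omega
  d_comp_d' i j k _ _ := by
    rw [Preadditive.zsmul_comp, Preadditive.comp_zsmul, C.d_comp_d, smul_zero, smul_zero]

/-- Acyclicity of a complex. -/
def AcyclicCx (C : Cx A) : Prop := ∀ n : ℤ, C.ExactAt n

/-- Vanishing of the ordinary `Ext¹` in the abelian category `A`. -/
def Ext1Vanish (X Z : A) : Prop :=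
  ∀ ⦃W : A⦄ (i : Z ⟶ W) (p : W ⟶ X) (w : i ≫ p = 0),
    (ShortComplex.mk i p w).ShortExact → ∃ r : W ⟶ Z, i ≫ r = 𝟙 Z

/-- `(𝒻, 𝒞)` is a cotorsion pair in the abelian category `A`. -/
def CotorsionPair (𝒻 𝒞 : Set A) : Prop :=
  (∀ X : A, X ∈ 𝒻 ↔ ∀ Z ∈ 𝒞, Ext1Vanish X Z) ∧
  (∀ Z : A, Z ∈ 𝒞 ↔ ∀ X ∈ 𝒻, Ext1Vanish X Z)

/-- Completeness of a cotorsion pair. -/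
def CompletePair (𝒻 𝒞 : Set A) : Prop :=
  (∀ M : A, ∃ (Z F : A) (i : Z ⟶ F) (p : F ⟶ M) (w : i ≫ p = 0),
      (ShortComplex.mk i p w).ShortExact ∧ F ∈ 𝒻 ∧ Z ∈ 𝒞) ∧
  (∀ M : A, ∃ (Z F : A) (i : M ⟶ Z) (p : Z ⟶ F) (w : i ≫ p = 0),
      (ShortComplex.mk i p w).ShortExact ∧ Z ∈ 𝒞 ∧ F ∈ 𝒻)

/-- Heredity of a cotorsion pair. -/
def HereditaryPair (𝒻 𝒞 : Set A) : Prop :=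
  (∀ ⦃X Y Z : A⦄ (i : X ⟶ Y) (p : Y ⟶ Z) (w : i ≫ p = 0),
      (ShortComplex.mk i p w).ShortExact → Y ∈ 𝒻 → Z ∈ 𝒻 → X ∈ 𝒻) ∧
  (∀ ⦃X Y Z : A⦄ (i : X ⟶ Y) (p : Y ⟶ Z) (w : i ≫ p = 0),
      (ShortComplex.mk i p w).ShortExact → X ∈ 𝒞 → Y ∈ 𝒞 → Z ∈ 𝒞)

/-- A complete hereditary cotorsion triple `(𝒳, 𝒵, 𝒴)`. -/
def CotorsionTriple (𝒳 𝒵 𝒴 : Set A) : Prop :=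
  CotorsionPair 𝒳 𝒵 ∧ CotorsionPair 𝒵 𝒴 ∧
  CompletePair 𝒳 𝒵 ∧ CompletePair 𝒵 𝒴 ∧
  HereditaryPair 𝒳 𝒵 ∧ HereditaryPair 𝒵 𝒴


section Aux

variable {A : Type u} [Category.{v} A] [Abelian A] (𝒳 𝒴 : Set A)

/-- The corestriction `C.X (j+1) ⟶ ker (C.d j k)` of the differential of a right
`𝒳`-acyclic complex is an epimorphism. -/
lemma corestr_epi (hbp : BalancedPair 𝒳 𝒴) (hadm : Admissible 𝒳 𝒴) {C : Cx A}
    (hC : RightAcyclic 𝒳 C) (i j k : ℤ) (hi : i = j + 1) (hk : k = j - 1)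
    (w : C.d i j ≫ C.d j k = 0) :
    Epi (kernel.lift (C.d j k) (C.d i j) w) := by
  subst hi hk
  obtain ⟨X₀, hX₀, π, hπ⟩ := hbp.contravariantlyFinite (kernel (C.d j (j - 1)))
  haveI : Epi π := hadm.1 hX₀ π hπ
  obtain ⟨h, hh⟩ := hC j hX₀ (π ≫ kernel.ι _)
    (by rw [assoc, kernel.condition, comp_zero])
  have key : h ≫ kernel.lift (C.d j (j - 1)) (C.d (j + 1) j) w = π := by
    rw [← cancel_mono (kernel.ι (C.d j (j - 1))), assoc, kernel.lift_ι, hh]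
  haveI : Epi (h ≫ kernel.lift (C.d j (j - 1)) (C.d (j + 1) j) w) := by
    rw [key]; infer_instance
  exact epi_of_epi h _

/-- Maps from objects of `𝒳` lift along the corestriction of the differential. -/
lemma corestr_lift {C : Cx A} (hC : RightAcyclic 𝒳 C) (i j k : ℤ)
    (hi : i = j + 1) (hk : k = j - 1) (w : C.d i j ≫ C.d j k = 0) :
    ∀ ⦃X : A⦄, X ∈ 𝒳 → ∀ γ : X ⟶ kernel (C.d j k),
      ∃ t : X ⟶ C.X i, t ≫ kernel.lift (C.d j k) (C.d i j) w = γ := by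
  subst hi hk
  intro X hX γ
  obtain ⟨t, ht⟩ := hC j hX (γ ≫ kernel.ι _)
    (by rw [assoc, kernel.condition, comp_zero])
  exact ⟨t, by rw [← cancel_mono (kernel.ι (C.d j (j - 1))), assoc, kernel.lift_ι, ht]⟩

/-- The dual: the map induced by the differential on the cokernel of the previous
differential of a left `𝒴`-acyclic complex is a monomorphism. -/
lemma costr_mono (hbp : BalancedPair 𝒳 𝒴) (hadm : Admissible 𝒳 𝒴) {C : Cx A}
    (hC : LeftAcyclic 𝒴 C) (i j k : ℤ) (hi : i = j + 1) (hk : k = j - 1)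
    (w : C.d i j ≫ C.d j k = 0) :
    Mono (cokernel.desc (C.d i j) (C.d j k) w) := by
  subst hi hk
  obtain ⟨Y₀, hY₀, ν, hν⟩ := hbp.covariantlyFinite (cokernel (C.d (j + 1) j))
  haveI : Mono ν := hadm.2 hY₀ ν hν
  obtain ⟨t, ht⟩ := hC j hY₀ (cokernel.π (C.d (j + 1) j) ≫ ν)
    (by rw [← assoc, cokernel.condition, zero_comp])
  have key : cokernel.desc (C.d (j + 1) j) (C.d j (j - 1)) w ≫ t = ν := by
    rw [← cancel_epi (cokernel.π (C.d (j + 1) j)), ← assoc, cokernel.π_desc, ht]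
  haveI : Mono (cokernel.desc (C.d (j + 1) j) (C.d j (j - 1)) w ≫ t) := by
    rw [key]; infer_instance
  exact mono_of_mono _ t

/-- Maps to objects of `𝒴` extend along the map induced on cokernels. -/
lemma costr_extend {C : Cx A} (hC : LeftAcyclic 𝒴 C) (i j k : ℤ)
    (hi : i = j + 1) (hk : k = j - 1) (w : C.d i j ≫ C.d j k = 0) :
    ∀ ⦃Y : A⦄, Y ∈ 𝒴 → ∀ y : cokernel (C.d i j) ⟶ Y,
      ∃ t : C.X k ⟶ Y, cokernel.desc (C.d i j) (C.d j k) w ≫ t = y := by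
  subst hi hk
  intro Y hY y
  obtain ⟨t, ht⟩ := hC j hY (cokernel.π (C.d (j + 1) j) ≫ y)
    (by rw [← assoc, cokernel.condition, zero_comp])
  exact ⟨t, by rw [← cancel_epi (cokernel.π (C.d (j + 1) j)), ← assoc, cokernel.π_desc, ht]⟩

lemma ker_corestr_exact {B Cc D : A} (u : B ⟶ Cc) (v : Cc ⟶ D) (w : u ≫ v = 0)
    (w' : kernel.ι u ≫ kernel.lift v u w = 0) :
    (ShortComplex.mk (kernel.ι u) (kernel.lift v u w) w').Exact := by
  apply ShortComplex.exact_of_f_is_kernel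
  exact KernelFork.IsLimit.ofι _ _
    (fun {W'} t ht => kernel.lift u t
      (by rw [← kernel.lift_ι v u w, ← assoc, ht, zero_comp]))
    (fun {W'} t ht => kernel.lift_ι _ _ _)
    (fun {W'} t ht m hm => by
      rw [← cancel_mono (kernel.ι u), hm, kernel.lift_ι])

lemma coker_costr_exact {B Cc D : A} (u : B ⟶ Cc) (v : Cc ⟶ D) (w : u ≫ v = 0)
    (w' : cokernel.desc u v w ≫ cokernel.π v = 0) :
    (ShortComplex.mk (cokernel.desc u v w) (cokernel.π v) w').Exact := by
  apply ShortComplex.exact_of_g_is_cokernel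
  exact CokernelCofork.IsColimit.ofπ _ _
    (fun {W'} t ht => cokernel.desc v t
      (by rw [← cokernel.π_desc u v w, assoc, ht, comp_zero]))
    (fun {W'} t ht => cokernel.π_desc _ _ _)
    (fun {W'} t ht m hm => by
      rw [← cancel_epi (cokernel.π v), hm, cokernel.π_desc])

end Aux

section Aux2

variable {A : Type u} [Category.{v} A] [Abelian A] (𝒳 𝒴 : Set A)

/-- Lemma C: an exact sequence `0 → Y₀ → P → M` with the `𝒳`-lifting property and
`Y₀ ∈ 𝒴` splits. -/
lemma split_of_mem_Y (hbp : BalancedPair 𝒳 𝒴) (hadm : Admissible 𝒳 𝒴)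
    {Y₀ P M : A} (hY₀ : Y₀ ∈ 𝒴) (j : Y₀ ⟶ P) (q : P ⟶ M) (wjq : j ≫ q = 0)
    (hmono : Mono j) (hex : (ShortComplex.mk j q wjq).Exact)
    (hlift : ∀ ⦃X : A⦄, X ∈ 𝒳 → ∀ x : X ⟶ M, ∃ t : X ⟶ P, t ≫ q = x) :
    ∃ r : P ⟶ Y₀, j ≫ r = 𝟙 Y₀ := by
  haveI := hmono
  haveI : Mono (ShortComplex.mk j q wjq).f := hmono
  obtain ⟨R, hres, hra, hla⟩ := hbp.resolution M
  obtain ⟨hXmem, hzero, ⟨φ⟩⟩ := hres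
  set ε : R.X 0 ⟶ M := R.d 0 (-1) ≫ φ.hom with hε
  have hεapp : IsRightApprox 𝒳 ε := by
    intro X' hX' x
    have h1 : (x ≫ φ.inv) ≫ R.d (-1) (-1 - 1) = 0 :=
      (hzero (-1 - 1) (by omega)).eq_of_tgt _ _
    have H := hra (-1) hX' (x ≫ φ.inv) h1
    rw [show (-1 : ℤ) + 1 = 0 by omega] at H
    obtain ⟨h, hh⟩ := H
    exact ⟨h, by rw [hε, ← assoc, hh, assoc, Iso.inv_hom_id, comp_id]⟩
  haveI hεepi : Epi ε := hadm.1 (hXmem 0 le_rfl) ε hεapp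
  obtain ⟨l, hl⟩ := hlift (hXmem 0 le_rfl) ε
  have hkτ : (kernel.ι ε ≫ l) ≫ (ShortComplex.mk j q wjq).g = 0 := by
    show (kernel.ι ε ≫ l) ≫ q = 0
    rw [assoc, hl, kernel.condition]
  set τ := hex.lift (kernel.ι ε ≫ l) hkτ with hτdef
  have hτ : τ ≫ j = kernel.ι ε ≫ l := hex.lift_f _ _
  -- the corestriction e : R.X 1 ⟶ kernel ε
  have hde : R.d 1 0 ≫ ε = 0 := by rw [hε, ← assoc, R.d_comp_d, zero_comp]
  set e := kernel.lift ε (R.d 1 0) hde with hedef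
  have he : e ≫ kernel.ι ε = R.d 1 0 := kernel.lift_ι _ _ _
  -- e is epi
  have hkd : kernel.ι ε ≫ R.d 0 (0 - 1) = 0 := by
    rw [show (0 : ℤ) - 1 = -1 by omega, ← cancel_mono φ.hom, assoc, ← hε,
      kernel.condition, zero_comp]
  obtain ⟨X₀, hX₀, π, hπ⟩ := hbp.contravariantlyFinite (kernel ε)
  haveI : Epi π := hadm.1 hX₀ π hπ
  have H := hra 0 hX₀ (π ≫ kernel.ι ε) (by rw [assoc, hkd, comp_zero])
  rw [show (0 : ℤ) + 1 = 1 by omega] at H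
  obtain ⟨t, ht⟩ := H
  have hte : t ≫ e = π := by rw [← cancel_mono (kernel.ι ε), assoc, he, ht]
  haveI : Epi (t ≫ e) := by rw [hte]; infer_instance
  haveI hee : Epi e := epi_of_epi t e
  -- σ : R.X 0 ⟶ Y₀ extending τ
  have h2 : R.d (1 + 1) 1 ≫ (e ≫ τ) = 0 := by
    have h3 : R.d (1 + 1) 1 ≫ e = 0 := by
      rw [← cancel_mono (kernel.ι ε), assoc, he, R.d_comp_d, zero_comp]
    rw [← assoc, h3, zero_comp]
  have H2 := hla 1 hY₀ (e ≫ τ) h2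
  rw [show (1 : ℤ) - 1 = 0 by omega] at H2
  obtain ⟨σ, hσ⟩ := H2
  have hkσ : kernel.ι ε ≫ σ = τ := by rw [← cancel_epi e, ← assoc, he, hσ]
  -- the retraction
  have hkl' : kernel.ι ε ≫ (l - σ ≫ j) = 0 := by
    rw [Preadditive.comp_sub, ← assoc, hkσ, hτ, sub_self]
  set ρ := Abelian.epiDesc ε (l - σ ≫ j) hkl' with hρdef
  have hρ : ε ≫ ρ = l - σ ≫ j := Abelian.comp_epiDesc _ _ _
  have hρq : ρ ≫ q = 𝟙 M := by
    rw [← cancel_epi ε, ← assoc, hρ, Preadditive.sub_comp, assoc, wjq, comp_zero,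
      sub_zero, hl, comp_id]
  have hm : (𝟙 P - q ≫ ρ) ≫ (ShortComplex.mk j q wjq).g = 0 := by
    show (𝟙 P - q ≫ ρ) ≫ q = 0
    rw [Preadditive.sub_comp, id_comp, assoc, hρq, comp_id, sub_self]
  refine ⟨hex.lift (𝟙 P - q ≫ ρ) hm, ?_⟩
  have hrj := hex.lift_f (𝟙 P - q ≫ ρ) hm
  rw [← cancel_mono j, assoc, hrj, Preadditive.comp_sub, comp_id, ← assoc, wjq,
    zero_comp, sub_zero, id_comp]

/-- Lemma C': an exact sequence `M' → P → X₀ → 0` with the `𝒴`-extension property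
and `X₀ ∈ 𝒳` splits. -/
lemma cosplit_of_mem_X (hbp : BalancedPair 𝒳 𝒴) (hadm : Admissible 𝒳 𝒴)
    {M' P X₀ : A} (hX₀ : X₀ ∈ 𝒳) (j : M' ⟶ P) (q : P ⟶ X₀) (wjq : j ≫ q = 0)
    (hepi : Epi q) (hex : (ShortComplex.mk j q wjq).Exact)
    (hext : ∀ ⦃Y : A⦄, Y ∈ 𝒴 → ∀ y : M' ⟶ Y, ∃ t : P ⟶ Y, j ≫ t = y) :
    ∃ s : X₀ ⟶ P, s ≫ q = 𝟙 X₀ := by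
  haveI := hepi
  haveI : Epi (ShortComplex.mk j q wjq).g := hepi
  obtain ⟨S, hcores, hra, hla⟩ := hbp.coresolution M'
  obtain ⟨hYmem, hzero, ⟨φ⟩⟩ := hcores
  set μ : M' ⟶ S.X (-1) := φ.inv ≫ S.d 0 (-1) with hμ
  have hμapp : IsLeftApprox 𝒴 μ := by
    intro Y' hY' y
    have h1 : S.d (0 + 1) 0 ≫ (φ.hom ≫ y) = 0 :=
      (hzero (0 + 1) (by omega)).eq_of_src _ _
    have H := hla 0 hY' (φ.hom ≫ y) h1
    rw [show (0 : ℤ) - 1 = -1 by omega] at H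
    obtain ⟨t, ht⟩ := H
    exact ⟨t, by rw [hμ, assoc, ht, ← assoc, Iso.inv_hom_id, id_comp]⟩
  haveI hμm : Mono μ := hadm.2 (hYmem (-1) le_rfl) μ hμapp
  obtain ⟨l, hl⟩ := hext (hYmem (-1) le_rfl) μ
  have hτw : (ShortComplex.mk j q wjq).f ≫ (l ≫ cokernel.π μ) = 0 := by
    show j ≫ (l ≫ cokernel.π μ) = 0
    rw [← assoc, hl, cokernel.condition]
  set τ := hex.desc (l ≫ cokernel.π μ) hτw with hτdef
  have hτ : q ≫ τ = l ≫ cokernel.π μ := hex.g_desc _ _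
  -- e' : cokernel μ ⟶ S.X (-1-1)
  have hde : μ ≫ S.d (-1) (-1 - 1) = 0 := by rw [hμ, assoc, S.d_comp_d, comp_zero]
  set e' := cokernel.desc μ (S.d (-1) (-1 - 1)) hde with he'def
  have he' : cokernel.π μ ≫ e' = S.d (-1) (-1 - 1) := cokernel.π_desc _ _ _
  -- e' is mono
  have hdk : S.d (0 + 1) 0 ≫ (φ.hom ≫ μ ≫ cokernel.π μ) = 0 := by
    rw [cokernel.condition, comp_zero, comp_zero]
  have hdkc : S.d 0 (-1) ≫ cokernel.π μ = 0 := by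
    rw [← cancel_epi φ.inv, ← assoc, ← hμ, cokernel.condition, comp_zero]
  obtain ⟨Yν, hYν, ν, hν⟩ := hbp.covariantlyFinite (cokernel μ)
  haveI : Mono ν := hadm.2 hYν ν hν
  have H := hla (-1) hYν (cokernel.π μ ≫ ν)
    (by rw [show (-1 : ℤ) + 1 = 0 by omega, ← assoc, hdkc, zero_comp])
  obtain ⟨t, ht⟩ := H
  have hte : e' ≫ t = ν := by rw [← cancel_epi (cokernel.π μ), ← assoc, he', ht]
  haveI : Mono (e' ≫ t) := by rw [hte]; infer_instance
  haveI : Mono e' := mono_of_mono e' t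
  -- σ : X₀ ⟶ S.X (-1) lifting τ
  have h3 : (τ ≫ e') ≫ S.d (-1 - 1) (-1 - 1 - 1) = 0 := by
    have h4 : e' ≫ S.d (-1 - 1) (-1 - 1 - 1) = 0 := by
      rw [← cancel_epi (cokernel.π μ), ← assoc, he', S.d_comp_d, comp_zero]
    rw [assoc, h4, comp_zero]
  have H2 := hra (-1 - 1) hX₀ (τ ≫ e') h3
  rw [show (-1 : ℤ) - 1 + 1 = -1 by omega] at H2
  obtain ⟨σ, hσ⟩ := H2
  have hσk : σ ≫ cokernel.π μ = τ := by rw [← cancel_mono e', assoc, he', hσ]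
  -- the section
  have hkl' : (l - q ≫ σ) ≫ cokernel.π μ = 0 := by
    rw [Preadditive.sub_comp, assoc, hσk, hτ, sub_self]
  set ρ := Abelian.monoLift μ (l - q ≫ σ) hkl' with hρdef
  have hρ : ρ ≫ μ = l - q ≫ σ := Abelian.monoLift_comp _ _ _
  have hjρ : j ≫ ρ = 𝟙 M' := by
    rw [← cancel_mono μ, assoc, hρ, Preadditive.comp_sub, hl, ← assoc, wjq,
      zero_comp, sub_zero, id_comp]
  have hm : (ShortComplex.mk j q wjq).f ≫ (𝟙 P - ρ ≫ j) = 0 := by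
    show j ≫ (𝟙 P - ρ ≫ j) = 0
    rw [Preadditive.comp_sub, comp_id, ← assoc, hjρ, id_comp, sub_self]
  refine ⟨hex.desc (𝟙 P - ρ ≫ j) hm, ?_⟩
  have hsq := hex.g_desc (𝟙 P - ρ ≫ j) hm
  rw [← cancel_epi q, ← assoc, hsq, Preadditive.sub_comp, id_comp, assoc, wjq,
    comp_zero, sub_zero, comp_id]

end Aux2

section Aux3

variable {A : Type u} [Category.{v} A] [Abelian A] (𝒳 𝒴 : Set A)

/-- Lemma A: a map to an object of `𝒴` extends along the mono of an exact sequence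
with the `𝒳`-lifting property. -/
lemma extend_along (hbp : BalancedPair 𝒳 𝒴) (hadm : Admissible 𝒳 𝒴)
    {Am B M Y : A} (hY : Y ∈ 𝒴) (i : Am ⟶ B) (p : B ⟶ M) (wip : i ≫ p = 0)
    (hmi : Mono i) (hexip : (ShortComplex.mk i p wip).Exact)
    (hlift : ∀ ⦃X : A⦄, X ∈ 𝒳 → ∀ x : X ⟶ M, ∃ t : X ⟶ B, t ≫ p = x)
    (f : Am ⟶ Y) : ∃ h : B ⟶ Y, i ≫ h = f := by
  haveI := hmi
  haveI : Mono (ShortComplex.mk i p wip).f := hmi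
  obtain ⟨Y₀, hY₀, μ, hμ⟩ := hbp.covariantlyFinite Am
  obtain ⟨ft, hft⟩ := hμ hY f
  -- the pushout, constructed as a cokernel
  set u : Am ⟶ B ⊞ Y₀ := biprod.lift i (-μ) with hu
  haveI : Mono (u ≫ biprod.fst) := by rw [hu, biprod.lift_fst]; exact hmi
  haveI : Mono u := mono_of_mono u biprod.fst
  set c := cokernel.π u with hc
  set j := biprod.inr ≫ c with hj
  have hudesc : u ≫ biprod.desc p 0 = 0 := by
    rw [hu, biprod.lift_desc, wip, comp_zero, add_zero]
  set q := cokernel.desc u (biprod.desc p 0) hudesc with hq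
  have hcq : c ≫ q = biprod.desc p 0 := cokernel.π_desc _ _ _
  have wjq : j ≫ q = 0 := by rw [hj, assoc, hcq, biprod.inr_desc]
  have hS0 : (ShortComplex.mk u c (cokernel.condition u)).Exact :=
    ShortComplex.exact_of_g_is_cokernel _ (cokernelIsCokernel u)
  have hu' : u = i ≫ biprod.inl - μ ≫ biprod.inr := by
    apply biprod.hom_ext
    · simp [hu]
    · simp [hu]
  have hic : i ≫ biprod.inl ≫ c = μ ≫ biprod.inr ≫ c := by
    have h0 : (i ≫ biprod.inl - μ ≫ biprod.inr) ≫ c = 0 := by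
      rw [← hu']; exact cokernel.condition u
    rw [Preadditive.sub_comp, sub_eq_zero, assoc, assoc] at h0
    exact h0
  -- j is mono
  have hmj : Mono j := by
    apply Preadditive.mono_of_cancel_zero
    intro T t ht
    obtain ⟨T', π₁, hπ₁, x₁, hx₁⟩ := hS0.exact_up_to_refinements (t ≫ biprod.inr)
      (by rw [assoc]; exact ht)
    have h5 := hx₁ =≫ biprod.fst
    simp only [assoc, biprod.inr_fst, comp_zero] at h5
    rw [hu, biprod.lift_fst] at h5
    have hx0 : x₁ = 0 := zero_of_comp_mono i h5.symm
    rw [hx0, zero_comp] at hx₁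
    have h6 := hx₁ =≫ biprod.snd
    simp only [assoc, biprod.inr_snd, comp_id, zero_comp] at h6
    exact zero_of_epi_comp π₁ h6
  -- the sequence (j, q) is exact
  have hexjq : (ShortComplex.mk j q wjq).Exact := by
    rw [ShortComplex.exact_iff_exact_up_to_refinements]
    intro T x₂ hx₂
    obtain ⟨T₁, π₁, hπ₁, w, hw⟩ := surjective_up_to_refinements_of_epi c x₂
    have hdesc : biprod.desc p (0 : Y₀ ⟶ M) = biprod.fst ≫ p := by
      apply biprod.hom_ext' <;> simp
    have h1 : (w ≫ biprod.fst) ≫ p = 0 := by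
      have h0 : w ≫ biprod.desc p 0 = 0 := by
        rw [← hcq, ← assoc, ← hw, assoc, hx₂, comp_zero]
      rw [hdesc, ← assoc] at h0
      exact h0
    obtain ⟨T₂, π₂, hπ₂, a, ha⟩ := hexip.exact_up_to_refinements (w ≫ biprod.fst) h1
    refine ⟨T₂, π₂ ≫ π₁, epi_comp _ _, π₂ ≫ (w ≫ biprod.snd) + a ≫ μ, ?_⟩
    have hw2 : π₂ ≫ w = biprod.lift (a ≫ i) (π₂ ≫ (w ≫ biprod.snd)) := by
      apply biprod.hom_ext
      · rw [assoc, biprod.lift_fst, ← ha]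
      · rw [assoc, biprod.lift_snd]
    have hlift_eq : biprod.lift (a ≫ i) (π₂ ≫ (w ≫ biprod.snd))
        = (a ≫ i) ≫ biprod.inl + (π₂ ≫ (w ≫ biprod.snd)) ≫ biprod.inr := by
      apply biprod.hom_ext <;> simp
    calc (π₂ ≫ π₁) ≫ x₂ = π₂ ≫ (w ≫ c) := by rw [assoc, hw]
      _ = (π₂ ≫ w) ≫ c := by rw [assoc]
      _ = ((a ≫ i) ≫ biprod.inl + (π₂ ≫ (w ≫ biprod.snd)) ≫ biprod.inr) ≫ c := by
          rw [hw2, hlift_eq]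
      _ = a ≫ (i ≫ biprod.inl ≫ c) + (π₂ ≫ (w ≫ biprod.snd)) ≫ (biprod.inr ≫ c) := by
          simp only [Preadditive.add_comp, assoc]
      _ = a ≫ (μ ≫ biprod.inr ≫ c) + (π₂ ≫ (w ≫ biprod.snd)) ≫ (biprod.inr ≫ c) := by
          rw [hic]
      _ = (π₂ ≫ (w ≫ biprod.snd) + a ≫ μ) ≫ j := by
          rw [hj]; simp only [Preadditive.add_comp, assoc]; rw [add_comm]
  -- lifting property along q
  have hliftq : ∀ ⦃X : A⦄, X ∈ 𝒳 → ∀ x : X ⟶ M, ∃ t : X ⟶ cokernel u, t ≫ q = x := by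
    intro X hX x
    obtain ⟨t, ht⟩ := hlift hX x
    refine ⟨t ≫ biprod.inl ≫ c, ?_⟩
    simp only [assoc]
    rw [hcq, biprod.inl_desc, ht]
  obtain ⟨r, hr⟩ := split_of_mem_Y 𝒳 𝒴 hbp hadm hY₀ j q wjq hmj hexjq hliftq
  refine ⟨(biprod.inl ≫ c) ≫ r ≫ ft, ?_⟩
  calc i ≫ (biprod.inl ≫ c) ≫ r ≫ ft
      = (i ≫ biprod.inl ≫ c) ≫ r ≫ ft := by simp only [assoc]
    _ = (μ ≫ biprod.inr ≫ c) ≫ r ≫ ft := by rw [hic]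
    _ = μ ≫ (j ≫ r) ≫ ft := by rw [hj]; simp only [assoc]
    _ = μ ≫ ft := by rw [hr, id_comp]
    _ = f := hft

/-- Lemma A': a map from an object of `𝒳` lifts along the epi of an exact sequence
with the `𝒴`-extension property. -/
lemma lift_along (hbp : BalancedPair 𝒳 𝒴) (hadm : Admissible 𝒳 𝒴)
    {M' B' C'' X : A} (hX : X ∈ 𝒳) (i : M' ⟶ B') (p : B' ⟶ C'') (wip : i ≫ p = 0)
    (hep : Epi p) (hexip : (ShortComplex.mk i p wip).Exact)
    (hext : ∀ ⦃Y : A⦄, Y ∈ 𝒴 → ∀ y : M' ⟶ Y, ∃ t : B' ⟶ Y, i ≫ t = y)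
    (g : X ⟶ C'') : ∃ h : X ⟶ B', h ≫ p = g := by
  haveI := hep
  haveI : Epi (ShortComplex.mk i p wip).g := hep
  obtain ⟨X₀, hX₀, π, hπ⟩ := hbp.contravariantlyFinite C''
  obtain ⟨gt, hgt⟩ := hπ hX g
  -- the pullback, constructed as a kernel
  set v : B' ⊞ X₀ ⟶ C'' := biprod.desc p (-π) with hv
  set c := kernel.ι v with hc
  have hj'w : biprod.lift i (0 : M' ⟶ X₀) ≫ v = 0 := by
    rw [hv, biprod.lift_desc, wip, zero_comp, add_zero]
  set j' := kernel.lift v (biprod.lift i 0) hj'w with hj'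
  have hj'c : j' ≫ c = biprod.lift i 0 := kernel.lift_ι _ _ _
  set q' := c ≫ biprod.snd with hq'
  have wj'q' : j' ≫ q' = 0 := by
    rw [hq', ← assoc, hj'c, biprod.lift_snd]
  have hlift0 : biprod.lift i (0 : M' ⟶ X₀) = i ≫ biprod.inl := by
    apply biprod.hom_ext <;> simp
  -- q' is epi
  haveI hq'epi : Epi q' := by
    rw [epi_iff_surjective_up_to_refinements]
    intro T y
    obtain ⟨T₂, π₂, hπ₂, b, hb⟩ := surjective_up_to_refinements_of_epi p (y ≫ π)
    have hbw : biprod.lift b (π₂ ≫ y) ≫ v = 0 := by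
      rw [hv, biprod.lift_desc, Preadditive.comp_neg, assoc, ← hb, add_neg_cancel]
    refine ⟨T₂, π₂, hπ₂, kernel.lift v (biprod.lift b (π₂ ≫ y)) hbw, ?_⟩
    rw [hq', ← assoc, kernel.lift_ι, biprod.lift_snd]
  -- the sequence (j', q') is exact
  have hexj'q' : (ShortComplex.mk j' q' wj'q').Exact := by
    rw [ShortComplex.exact_iff_exact_up_to_refinements]
    intro T x₂ hx₂
    have hsnd : (x₂ ≫ c) ≫ biprod.snd = 0 := by rw [assoc]; exact hx₂
    have hdec : x₂ ≫ c = (x₂ ≫ c ≫ biprod.fst) ≫ biprod.inl := by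
      apply biprod.hom_ext
      · simp only [assoc, biprod.inl_fst, comp_id]
      · simp only [assoc, biprod.inl_snd, comp_zero]
        rw [← assoc]; exact hsnd
    have hinlv : biprod.inl ≫ v = p := by rw [hv, biprod.inl_desc]
    have h1 : (x₂ ≫ c ≫ biprod.fst) ≫ p = 0 := by
      have h0 : (x₂ ≫ c) ≫ v = 0 := by rw [hc, assoc, kernel.condition, comp_zero]
      rw [hdec, assoc, hinlv] at h0
      exact h0
    obtain ⟨T₂, π₂, hπ₂, x₁, hx₁⟩ :=
      hexip.exact_up_to_refinements (x₂ ≫ c ≫ biprod.fst) h1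
    refine ⟨T₂, π₂, hπ₂, x₁, ?_⟩
    haveI : Mono c := by rw [hc]; infer_instance
    rw [← cancel_mono c, assoc, assoc, hj'c, hlift0, hdec, ← assoc, hx₁, assoc]
  -- extension property along j'
  have hextj' : ∀ ⦃Y : A⦄, Y ∈ 𝒴 → ∀ y : M' ⟶ Y, ∃ t : kernel v ⟶ Y, j' ≫ t = y := by
    intro Y hY y
    obtain ⟨t, ht⟩ := hext hY y
    refine ⟨c ≫ biprod.fst ≫ t, ?_⟩
    rw [← assoc, hj'c, ← assoc, biprod.lift_fst, ht]
  obtain ⟨s, hs⟩ := cosplit_of_mem_X 𝒳 𝒴 hbp hadm hX₀ j' q' wj'q' hq'epi hexj'q' hextj'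
  refine ⟨gt ≫ s ≫ c ≫ biprod.fst, ?_⟩
  have hveq : v = biprod.fst ≫ p - biprod.snd ≫ π := by
    apply biprod.hom_ext' <;> simp [hv]
  have hcf : c ≫ biprod.fst ≫ p = c ≫ biprod.snd ≫ π := by
    have h0 : c ≫ (biprod.fst ≫ p - biprod.snd ≫ π) = 0 := by
      rw [← hveq]; exact kernel.condition v
    rw [Preadditive.comp_sub, sub_eq_zero] at h0
    exact h0
  calc (gt ≫ s ≫ c ≫ biprod.fst) ≫ p
      = gt ≫ s ≫ (c ≫ biprod.fst ≫ p) := by simp only [assoc]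
    _ = gt ≫ (s ≫ q') ≫ π := by rw [hcf, hq']; simp only [assoc]
    _ = g := by rw [hs, id_comp, hgt]

end Aux3


/-- For an admissible balanced pair `(𝒳, 𝒴)`, a complex is right
`𝒳`-acyclic if and only if it is left `𝒴`-acyclic. -/
theorem stmt_4 {A : Type u} [Category.{v} A] [Abelian A]
    (𝒳 𝒴 : Set A) (hbp : BalancedPair 𝒳 𝒴) (hadm : Admissible 𝒳 𝒴) (C : Cx A) :
    RightAcyclic 𝒳 C ↔ LeftAcyclic 𝒴 C := by
  constructor
  · -- right 𝒳-acyclic → left 𝒴-acyclic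
    intro hra n Y hY g hg
    -- Step 1: g vanishes on the cycles in degree n
    haveI := corestr_epi 𝒳 𝒴 hbp hadm hra (n + 1) n (n - 1) rfl rfl (C.d_comp_d _ _ _)
    have h1 : kernel.ι (C.d n (n - 1)) ≫ g = 0 := by
      rw [← cancel_epi (kernel.lift (C.d n (n - 1)) (C.d (n + 1) n) (C.d_comp_d _ _ _)),
        ← assoc, kernel.lift_ι, hg, comp_zero]
    -- Step 2: factor g through the corestriction pb : C.X n ⟶ K₁
    set pb := kernel.lift (C.d (n - 1) (n - 1 - 1)) (C.d n (n - 1))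
      (C.d_comp_d n (n - 1) (n - 1 - 1)) with hpb
    have hpbι : pb ≫ kernel.ι (C.d (n - 1) (n - 1 - 1)) = C.d n (n - 1) :=
      kernel.lift_ι _ _ _
    haveI : Epi pb :=
      corestr_epi 𝒳 𝒴 hbp hadm hra n (n - 1) (n - 1 - 1) (by omega) rfl _
    have h2 : kernel.ι pb ≫ g = 0 := by
      have ha : kernel.ι pb ≫ C.d n (n - 1) = 0 := by
        rw [← hpbι, ← assoc, kernel.condition, zero_comp]
      have hb : kernel.ι pb
          = kernel.lift (C.d n (n - 1)) (kernel.ι pb) ha ≫ kernel.ι (C.d n (n - 1)) :=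
        (kernel.lift_ι _ _ _).symm
      rw [hb, assoc, h1, comp_zero]
    set g' := Abelian.epiDesc pb g h2 with hg'
    have hg'eq : pb ≫ g' = g := Abelian.comp_epiDesc _ _ _
    -- Step 3: extend g' along K₁ ⟶ C.X (n-1)
    have wipc : kernel.ι (C.d (n - 1) (n - 1 - 1))
        ≫ kernel.lift (C.d (n - 1 - 1) (n - 1 - 1 - 1)) (C.d (n - 1) (n - 1 - 1))
          (C.d_comp_d (n - 1) (n - 1 - 1) (n - 1 - 1 - 1)) = 0 := by
      rw [← cancel_mono (kernel.ι (C.d (n - 1 - 1) (n - 1 - 1 - 1))), assoc,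
        kernel.lift_ι, kernel.condition, zero_comp]
    have hexact := ker_corestr_exact (C.d (n - 1) (n - 1 - 1))
      (C.d (n - 1 - 1) (n - 1 - 1 - 1)) (C.d_comp_d _ _ _) wipc
    have hliftpc := corestr_lift 𝒳 hra (n - 1) (n - 1 - 1) (n - 1 - 1 - 1)
      (by omega) rfl (C.d_comp_d (n - 1) (n - 1 - 1) (n - 1 - 1 - 1))
    obtain ⟨h, hh⟩ := extend_along 𝒳 𝒴 hbp hadm hY
      (kernel.ι (C.d (n - 1) (n - 1 - 1)))
      (kernel.lift (C.d (n - 1 - 1) (n - 1 - 1 - 1)) (C.d (n - 1) (n - 1 - 1))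
        (C.d_comp_d (n - 1) (n - 1 - 1) (n - 1 - 1 - 1)))
      wipc inferInstance hexact hliftpc g'
    refine ⟨h, ?_⟩
    rw [← hpbι, assoc, hh, hg'eq]
  · -- left 𝒴-acyclic → right 𝒳-acyclic
    intro hla n X hX g hg
    -- Step 1: g vanishes into the cokernel of d (n+1) n
    haveI := costr_mono 𝒳 𝒴 hbp hadm hla (n + 1) n (n - 1) rfl rfl (C.d_comp_d _ _ _)
    have h1 : g ≫ cokernel.π (C.d (n + 1) n) = 0 := by
      rw [← cancel_mono (cokernel.desc (C.d (n + 1) n) (C.d n (n - 1)) (C.d_comp_d _ _ _)),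
        assoc, cokernel.π_desc, hg, zero_comp]
    -- Step 2: factor g through δa : Q₂ ⟶ C.X n
    set δa := cokernel.desc (C.d (n + 1 + 1) (n + 1)) (C.d (n + 1) n)
      (C.d_comp_d (n + 1 + 1) (n + 1) n) with hδa
    have hδaπ : cokernel.π (C.d (n + 1 + 1) (n + 1)) ≫ δa = C.d (n + 1) n :=
      cokernel.π_desc _ _ _
    haveI : Mono δa :=
      costr_mono 𝒳 𝒴 hbp hadm hla (n + 1 + 1) (n + 1) n rfl (by omega) _
    have h2 : g ≫ cokernel.π δa = 0 := by
      have ha : C.d (n + 1) n ≫ cokernel.π δa = 0 := by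
        rw [← hδaπ, assoc, cokernel.condition, comp_zero]
      have hb : cokernel.π δa
          = cokernel.π (C.d (n + 1) n) ≫ cokernel.desc (C.d (n + 1) n) (cokernel.π δa) ha :=
        (cokernel.π_desc _ _ _).symm
      rw [hb, ← assoc, h1, zero_comp]
    set g' := Abelian.monoLift δa g h2 with hg'
    have hg'eq : g' ≫ δa = g := Abelian.monoLift_comp _ _ _
    -- Step 3: lift g' along C.X (n+1) ⟶ Q₂
    have wdc : cokernel.desc (C.d (n + 1 + 1 + 1) (n + 1 + 1)) (C.d (n + 1 + 1) (n + 1))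
          (C.d_comp_d (n + 1 + 1 + 1) (n + 1 + 1) (n + 1))
        ≫ cokernel.π (C.d (n + 1 + 1) (n + 1)) = 0 := by
      rw [← cancel_epi (cokernel.π (C.d (n + 1 + 1 + 1) (n + 1 + 1))), ← assoc,
        cokernel.π_desc, cokernel.condition, comp_zero]
    have hexact := coker_costr_exact (C.d (n + 1 + 1 + 1) (n + 1 + 1))
      (C.d (n + 1 + 1) (n + 1)) (C.d_comp_d _ _ _) wdc
    have hextdc := costr_extend 𝒴 hla (n + 1 + 1 + 1) (n + 1 + 1) (n + 1)
      rfl (by omega) (C.d_comp_d (n + 1 + 1 + 1) (n + 1 + 1) (n + 1))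
    obtain ⟨h, hh⟩ := lift_along 𝒳 𝒴 hbp hadm hX
      (cokernel.desc (C.d (n + 1 + 1 + 1) (n + 1 + 1)) (C.d (n + 1 + 1) (n + 1))
        (C.d_comp_d (n + 1 + 1 + 1) (n + 1 + 1) (n + 1)))
      (cokernel.π (C.d (n + 1 + 1) (n + 1)))
      wdc inferInstance hexact hextdc g'
    refine ⟨h, ?_⟩
    rw [← hδaπ, ← assoc, hh, hg'eq]


end Paper
end

section
/- Let (X, Y) be an admissible balanced pair in an abelian category A, and let E be the class of short exact sequences in A that remain exact after applying Hom_A(X, −) for all X ∈ X. If an object Z of A has the property that Hom_A(Z, −) sends every right X-acyclic complex to an acyclic complex, then Z belongs to X. Consequently, X is closed under arbitrary direct sums. -/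
open CategoryTheory Category Limits ZeroObject

universe v u

namespace Paper

variable {A : Type u} [Category.{v} A] [Abelian A]

/-- If `Hom_A(Z, -)` sends every right `𝒳`-acyclic complex to an acyclic
complex then `Z ∈ 𝒳`; consequently `𝒳` is closed under arbitrary direct sums. -/
theorem stmt_5 {A : Type u} [Category.{v} A] [Abelian A] [HasColimits A]
    (𝒳 𝒴 : Set A) (hbp : BalancedPair 𝒳 𝒴) (hadm : Admissible 𝒳 𝒴) :
    (∀ Z : A, (∀ E : Cx A, RightAcyclic 𝒳 E → RightAcyclic {Z} E) → Z ∈ 𝒳) ∧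
    (∀ (ι : Type v) (g : ι → A), (∀ i, g i ∈ 𝒳) → (∐ g) ∈ 𝒳) := by
  have main : ∀ Z : A, (∀ E : Cx A, RightAcyclic 𝒳 E → RightAcyclic {Z} E) → Z ∈ 𝒳 := by
    intro Z hZ
    obtain ⟨R, ⟨hmem, hzero, ⟨e⟩⟩, hra, -⟩ := hbp.resolution Z
    have hac : RightAcyclic {Z} R := hZ R hra
    have hz : e.inv ≫ R.d (-1) (-1 - 1) = 0 :=
      (hzero (-1 - 1) (by omega)).eq_of_tgt _ 0
    obtain ⟨h, hh⟩ := hac (-1) (Set.mem_singleton Z) e.inv hz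
    refine hbp.summandClosedX (hmem (-1 + 1) (by omega)) h (R.d (-1 + 1) (-1) ≫ e.hom) ?_
    rw [← assoc, hh, Iso.inv_hom_id]
  refine ⟨main, fun ι g hg => ?_⟩
  apply main
  intro E hE n X hX go hgo
  obtain rfl : X = ∐ g := hX
  choose h hh using fun i =>
    hE n (hg i) (Sigma.ι g i ≫ go) (by rw [assoc, hgo, comp_zero])
  refine ⟨Sigma.desc h, Sigma.hom_ext _ _ fun i => ?_⟩
  rw [← assoc]
  simp only [colimit.ι_desc, Cofan.mk_ι_app]
  exact hh i

end Paper
end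

section
/- Let (X, Z, Y) be a complete hereditary cotorsion triple in a Grothendieck category A, with induced exact structure E (right X-acyclic short exact sequences). Then dgX̃ = E-dwX̃ if and only if E-dgX̃ = E-dwX̃, where E-dwX̃ is the class of complexes with terms in X, dgX̃ is the class of such complexes whose maps to acyclic complexes with cycles in Z are null homotopic, and E-dgX̃ is the class of such complexes whose maps to all right X-acyclic complexes are null homotopic. -/
open CategoryTheory Category Limits ZeroObject

universe v u

namespace Paper

variable {A : Type u} [Category.{v} A] [Abelian A]

variable {A : Type u} [Category.{v} A] [Abelian A]

/-- The class `Z̃` of acyclic complexes with all cycles in `𝒵`. -/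
def Ztilde (𝒵 : Set A) : Set (Cx A) :=
  {C | AcyclicCx C ∧ ∀ n : ℤ, kernel (C.d n (n - 1)) ∈ 𝒵}

/-- The class `dg X̃`: complexes with terms in `𝒳` all of whose maps to complexes in `Z̃`
are null homotopic. -/
def dgXZ (𝒳 𝒵 : Set A) : Set (Cx A) :=
  {G | (∀ n : ℤ, G.X n ∈ 𝒳) ∧ ∀ Z ∈ Ztilde 𝒵, ∀ f : G ⟶ Z, NullHomotopic f}


section Aux

variable {𝒳 𝒵 𝒴 : Set A}

/-- Reindexing the target of a differential gives isomorphic kernels. -/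
noncomputable def kernelDCongr (C : Cx A) (i : ℤ) (j j' : ℤ) (h : j = j') :
    kernel (C.d i j) ≅ kernel (C.d i j') := by subst h; exact Iso.refl _

/-- Transport a short exact sequence along an isomorphism of the left term. -/
lemma shortExact_precomp_iso {X₁ X₁' X₂ X₃ : A} (e : X₁' ≅ X₁) {i : X₁ ⟶ X₂} {p : X₂ ⟶ X₃}
    {w : i ≫ p = 0} (h : (ShortComplex.mk i p w).ShortExact) :
    (ShortComplex.mk (e.hom ≫ i) p (by rw [assoc, w, comp_zero])).ShortExact := by
  have hm : Mono (e.hom ≫ i) := by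
    have := h.mono_f
    exact mono_comp _ _
  have he : Epi p := h.epi_g
  refine ⟨?_⟩
  rw [ShortComplex.exact_iff_exact_up_to_refinements]
  intro T x hx
  obtain ⟨T', π, hπ, y, hy⟩ := h.exact.exact_up_to_refinements x hx
  exact ⟨T', π, hπ, y ≫ e.inv, by simpa [assoc] using hy⟩

/-- `Ext1Vanish` is invariant under isomorphism in the second variable. -/
lemma ext1Vanish_iso_right {X Z Z' : A} (e : Z ≅ Z') (h : Ext1Vanish X Z) :
    Ext1Vanish X Z' := by
  intro W i p w se
  obtain ⟨r, hr⟩ := h (e.hom ≫ i) p (by rw [assoc, w, comp_zero])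
    (shortExact_precomp_iso e se)
  refine ⟨r ≫ e.hom, ?_⟩
  have : e.hom ≫ i ≫ r = 𝟙 Z := by simpa [assoc] using hr
  have h2 : i ≫ r = e.inv := by
    calc i ≫ r = (e.inv ≫ e.hom) ≫ i ≫ r := by simp
    _ = e.inv := by rw [assoc, this, comp_id]
  rw [← assoc, h2, e.inv_hom_id]

/-- The right class of a cotorsion pair is closed under isomorphism. -/
lemma memZ_of_iso (hp : CotorsionPair 𝒳 𝒵) {Z Z' : A} (e : Z ≅ Z') (hZ : Z ∈ 𝒵) :
    Z' ∈ 𝒵 := by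
  rw [hp.2]
  intro X hX
  exact ext1Vanish_iso_right e (((hp.2 Z).mp hZ) X hX)

/-- Lifting along an epimorphism whose kernel has vanishing `Ext¹`. -/
lemma lift_of_ext1Vanish {C W M X : A} {i : C ⟶ W} {p : W ⟶ M} {w : i ≫ p = 0}
    (se : (ShortComplex.mk i p w).ShortExact) (hv : Ext1Vanish X C) (g : X ⟶ M) :
    ∃ h : X ⟶ W, h ≫ p = g := by
  have hEpi : Epi p := se.epi_g
  have hMono : Mono i := se.mono_f
  let P := pullback p g
  let i' : C ⟶ P := pullback.lift i 0 (by rw [w, zero_comp])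
  have hi'fst : i' ≫ pullback.fst p g = i := pullback.lift_fst _ _ _
  have hi'snd : i' ≫ pullback.snd p g = 0 := pullback.lift_snd _ _ _
  have hm : Mono i' := mono_of_mono_fac hi'fst
  have hsnd : Epi (pullback.snd p g) := inferInstance
  have se' : (ShortComplex.mk i' (pullback.snd p g) hi'snd).ShortExact := by
    refine ⟨?_⟩
    rw [ShortComplex.exact_iff_exact_up_to_refinements]
    intro T x hx
    have hx0 : x ≫ pullback.snd p g = 0 := hx
    have hx' : (x ≫ pullback.fst p g) ≫ p = 0 := by
      rw [assoc, pullback.condition, ← assoc, hx0, zero_comp]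
    obtain ⟨T', π, hπ, y, hy⟩ := se.exact.exact_up_to_refinements (x ≫ pullback.fst p g) hx'
    refine ⟨T', π, hπ, y, ?_⟩
    apply pullback.hom_ext
    · show (π ≫ x) ≫ pullback.fst p g = (y ≫ i') ≫ pullback.fst p g
      rw [assoc, show π ≫ x ≫ pullback.fst p g = y ≫ i from hy, assoc, hi'fst]
    · show (π ≫ x) ≫ pullback.snd p g = (y ≫ i') ≫ pullback.snd p g
      rw [assoc, hx0, comp_zero, assoc, hi'snd, comp_zero]
  obtain ⟨r, hr⟩ := hv i' (pullback.snd p g) hi'snd se'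
  let spl := ShortComplex.Splitting.ofExactOfRetraction _ se'.exact r hr se'.epi_g
  refine ⟨spl.s ≫ pullback.fst p g, ?_⟩
  have hsg : spl.s ≫ pullback.snd p g = 𝟙 X := spl.s_g
  rw [assoc, pullback.condition, ← assoc, hsg, id_comp]

/-- Acyclic complexes with cycles in `𝒵` are right `𝒳`-acyclic. -/
lemma ztilde_subset_etilde (hp : CotorsionPair 𝒳 𝒵) :
    Ztilde 𝒵 ⊆ Etilde (A := A) 𝒳 := by
  rintro C ⟨hac, hker⟩ n X hX g hg
  -- the corestriction of `d (n+1) n` to cycles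
  let p : C.X (n + 1) ⟶ kernel (C.d n (n - 1)) :=
    kernel.lift (C.d n (n - 1)) (C.d (n + 1) n) (C.d_comp_d _ _ _)
  have hpepi : Epi p := by
    have hprev : (ComplexShape.down ℤ).prev n = n + 1 :=
      (ComplexShape.down ℤ).prev_eq' (by simp)
    have hnext : (ComplexShape.down ℤ).next n = n - 1 :=
      (ComplexShape.down ℤ).next_eq' (by simp)
    have hE : (C.sc' (n + 1) n (n - 1)).Exact := (C.exactAt_iff' _ _ _ hprev hnext).mp (hac n)
    exact (ShortComplex.exact_iff_epi_kernel_lift _).mp hE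
  -- the kernel of `p`
  have hw : kernel.ι (C.d (n + 1) n) ≫ p = 0 := by
    rw [← cancel_mono (kernel.ι (C.d n (n - 1)))]
    simp [p]
  have se : (ShortComplex.mk (kernel.ι (C.d (n + 1) n)) p hw).ShortExact := by
    have : Mono (kernel.ι (C.d (n + 1) n)) := inferInstance
    refine ⟨?_⟩
    rw [ShortComplex.exact_iff_exact_up_to_refinements]
    intro T x hx
    have hx0 : x ≫ p = 0 := hx
    have hx' : x ≫ C.d (n + 1) n = 0 := by
      have := hx0 =≫ kernel.ι (C.d n (n - 1))
      simpa [p, assoc, zero_comp] using this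
    exact ⟨T, 𝟙 T, inferInstance, kernel.lift _ x hx', by simp⟩
  -- the kernel object is in 𝒵
  have hker' : kernel (C.d (n + 1) n) ∈ 𝒵 :=
    memZ_of_iso hp (kernelDCongr C (n + 1) _ _ (by omega)) (hker (n + 1))
  have hv : Ext1Vanish X (kernel (C.d (n + 1) n)) := ((hp.2 _).mp hker') X hX
  obtain ⟨h, hh⟩ := lift_of_ext1Vanish se hv (kernel.lift (C.d n (n - 1)) g hg)
  refine ⟨h, ?_⟩
  have := hh =≫ kernel.ι (C.d n (n - 1))
  simpa [p, assoc] using this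

end Aux


set_option maxHeartbeats 2000000 in
/-- The key construction: if `dg X̃ = dw X̃`, then every chain map from a complex with
terms in `𝒳` to a right `𝒳`-acyclic complex is null homotopic. -/
lemma forward_null (ht : CotorsionTriple 𝒳 𝒵 𝒴) (hyp : dgXZ 𝒳 𝒵 = dwX 𝒳)
    {G E : Cx A} (hG : G ∈ dwX 𝒳) (hE : E ∈ Etilde 𝒳) (f : G ⟶ E) :
    NullHomotopic f := by
  classical
  obtain ⟨pair1, _, comp1, _, _, _⟩ := ht
  -- special 𝒳-precovers of the cycles of `E`
  have hses : ∀ j : ℤ, ∃ (Cj Fj : A) (κ : Cj ⟶ Fj) (q : Fj ⟶ kernel (E.d j (j - 1)))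
      (w : κ ≫ q = 0), (ShortComplex.mk κ q w).ShortExact ∧ Fj ∈ 𝒳 ∧ Cj ∈ 𝒵 :=
    fun j => comp1.1 _
  choose CC FF κκ qq ww hse hF hC using hses
  -- lifts of the cycle inclusions through the differentials
  have hr0 : ∀ j : ℤ, ∃ rj : FF j ⟶ E.X (j + 1),
      rj ≫ E.d (j + 1) j = qq j ≫ kernel.ι (E.d j (j - 1)) := by
    intro j
    exact hE j (hF j) (qq j ≫ kernel.ι (E.d j (j - 1)))
      (by rw [assoc, kernel.condition, comp_zero])
  choose rr hrr using hr0
  -- the kernel complex `K`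
  let K : ℤ → A := fun j => pullback (rr j) (qq (j + 1) ≫ kernel.ι (E.d (j + 1) (j + 1 - 1)))
  let π₁ : ∀ j : ℤ, K j ⟶ FF j := fun j => pullback.fst _ _
  let π₂ : ∀ j : ℤ, K j ⟶ FF (j + 1) := fun j => pullback.snd _ _
  have cond : ∀ j : ℤ, π₁ j ≫ rr j
      = π₂ j ≫ (qq (j + 1) ≫ kernel.ι (E.d (j + 1) (j + 1 - 1))) :=
    fun j => pullback.condition
  have Khom_ext : ∀ (j : ℤ) {T : A} (a b : T ⟶ K j),
      a ≫ π₁ j = b ≫ π₁ j → a ≫ π₂ j = b ≫ π₂ j → a = b :=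
    fun j {T} a b h1 h2 => pullback.hom_ext h1 h2
  have liftK_fst : ∀ (j : ℤ) {T : A} (a : T ⟶ FF j) (b : T ⟶ FF (j + 1))
      (w : a ≫ rr j = b ≫ (qq (j + 1) ≫ kernel.ι (E.d (j + 1) (j + 1 - 1)))),
      pullback.lift a b w ≫ π₁ j = a := fun j {T} a b w => pullback.lift_fst _ _ _
  have liftK_snd : ∀ (j : ℤ) {T : A} (a : T ⟶ FF j) (b : T ⟶ FF (j + 1))
      (w : a ≫ rr j = b ≫ (qq (j + 1) ≫ kernel.ι (E.d (j + 1) (j + 1 - 1)))),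
      pullback.lift a b w ≫ π₂ j = b := fun j {T} a b w => pullback.lift_snd _ _ _
  have kι_d : ∀ i j : ℤ, kernel.ι (E.d i (i - 1)) ≫ E.d i j = 0 := by
    intro i j
    by_cases h : j = i - 1
    · subst h; exact kernel.condition _
    · rw [E.shape i j (by simp only [ComplexShape.down_Rel]; omega), comp_zero]
  have hπq : ∀ j : ℤ, π₁ j ≫ qq j = 0 := by
    intro j
    rw [← cancel_mono (kernel.ι (E.d j (j - 1))), assoc, zero_comp, ← hrr j, ← assoc, cond j,
      assoc, assoc, kι_d, comp_zero, comp_zero]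
  let dK : ∀ j : ℤ, K (j + 1) ⟶ K j := fun j => pullback.lift 0 (π₁ (j + 1))
    (by rw [zero_comp, ← assoc, hπq (j + 1), zero_comp])
  have dK_fst : ∀ j : ℤ, dK j ≫ π₁ j = 0 := fun j => pullback.lift_fst _ _ _
  have dK_snd : ∀ j : ℤ, dK j ≫ π₂ j = π₁ (j + 1) := fun j => pullback.lift_snd _ _ _
  have dKdK : ∀ j : ℤ, dK (j + 1) ≫ dK j = 0 := by
    intro j
    apply Khom_ext
    · rw [assoc, dK_fst, comp_zero, zero_comp]
    · rw [assoc, dK_snd, dK_fst, zero_comp]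
  -- the complex `KC` with `KC.X j = K j`
  let KC : Cx A :=
    { X := K
      d := fun i j => if h : j + 1 = i then eqToHom (congrArg K h.symm) ≫ dK j else 0
      shape := fun i j hij => dif_neg (by simpa [ComplexShape.down_Rel] using hij)
      d_comp_d' := by
        rintro i j k hij hjk
        simp only [ComplexShape.down_Rel] at hij hjk
        subst hij; subst hjk
        rw [dif_pos rfl, dif_pos rfl]
        simp only [eqToHom_refl, id_comp]
        exact dKdK k }
  have KC_d : ∀ j : ℤ, KC.d (j + 1) j = dK j := by
    intro j
    show (if h : j + 1 = j + 1 then eqToHom (congrArg K h.symm) ≫ dK j else 0) = dK j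
    rw [dif_pos rfl]
    simp
  -- transport helpers
  have π₁congr : ∀ (a b : ℤ) (h : a = b),
      eqToHom (congrArg K h) ≫ π₁ b = π₁ a ≫ eqToHom (congrArg FF h) := by
    rintro a b rfl; simp
  have KCd_eq : ∀ (a : ℤ) (i : ℤ) (h : a + 1 = i),
      KC.d i a = eqToHom (congrArg K h.symm) ≫ dK a := by
    intro a i h
    show (if h' : a + 1 = i then eqToHom (congrArg K h'.symm) ≫ dK a else 0) = _
    rw [dif_pos h]
  -- `KC` is acyclic
  have chase : ∀ (m : ℤ) (T : A) (y : T ⟶ K (m + 1)), y ≫ dK m = 0 →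
      ∃ (T' : A) (ρ : T' ⟶ T) (_ : Epi ρ) (z : T' ⟶ K (m + 1 + 1)), ρ ≫ y = z ≫ dK (m + 1) := by
    intro m T y hy
    have hy1 : y ≫ π₁ (m + 1) = 0 := by
      have := hy =≫ π₂ m
      rwa [assoc, dK_snd, zero_comp] at this
    have hy2 : (y ≫ π₂ (m + 1)) ≫ qq (m + 1 + 1) = 0 := by
      have h0 := y ≫= cond (m + 1)
      rw [← assoc, hy1, zero_comp] at h0
      rw [← cancel_mono (kernel.ι (E.d (m + 1 + 1) (m + 1 + 1 - 1))), zero_comp, assoc, assoc]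
      exact h0.symm
    haveI : Epi (qq (m + 1 + 1)) := (hse (m + 1 + 1)).epi_g
    obtain ⟨T₁, ρ₁, hρ₁, y₀, hy₀⟩ := (hse (m + 1 + 1)).exact.exact_up_to_refinements
      (y ≫ π₂ (m + 1)) hy2
    -- `κ ≫ r` lands in the cycles
    have hκr : ∀ t, (κκ (m + 1 + 1) ≫ rr (m + 1 + 1)) ≫ E.d (m + 1 + 1 + 1) t = 0 := by
      intro t
      by_cases h : t = m + 1 + 1
      · subst h
        rw [assoc, hrr, ← assoc, ww, zero_comp]
      · rw [E.shape _ t (by simp only [ComplexShape.down_Rel]; omega), comp_zero]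
    let c : CC (m + 1 + 1) ⟶ kernel (E.d (m + 1 + 1 + 1) (m + 1 + 1 + 1 - 1)) :=
      kernel.lift _ (κκ (m + 1 + 1) ≫ rr (m + 1 + 1)) (hκr _)
    have c_ι : c ≫ kernel.ι _ = κκ (m + 1 + 1) ≫ rr (m + 1 + 1) := kernel.lift_ι _ _ _
    haveI : Epi (qq (m + 1 + 1 + 1)) := (hse (m + 1 + 1 + 1)).epi_g
    let T₂ := pullback (qq (m + 1 + 1 + 1)) (y₀ ≫ c)
    let ρ₂ : T₂ ⟶ T₁ := pullback.snd _ _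
    let β : T₂ ⟶ FF (m + 1 + 1 + 1) := pullback.fst _ _
    have hβ : β ≫ qq (m + 1 + 1 + 1) = ρ₂ ≫ y₀ ≫ c := pullback.condition
    have hzc : (ρ₂ ≫ ρ₁ ≫ y ≫ π₂ (m + 1)) ≫ rr (m + 1 + 1)
        = β ≫ (qq (m + 1 + 1 + 1) ≫ kernel.ι (E.d (m + 1 + 1 + 1) (m + 1 + 1 + 1 - 1))) := by
      have h1 : ρ₁ ≫ y ≫ π₂ (m + 1) = y₀ ≫ κκ (m + 1 + 1) := hy₀
      rw [assoc, h1]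
      calc ρ₂ ≫ (y₀ ≫ κκ (m + 1 + 1)) ≫ rr (m + 1 + 1)
          = ρ₂ ≫ y₀ ≫ (c ≫ kernel.ι _) := by rw [c_ι, assoc]
        _ = (ρ₂ ≫ y₀ ≫ c) ≫ kernel.ι _ := by rw [assoc, assoc]
        _ = (β ≫ qq (m + 1 + 1 + 1)) ≫ kernel.ι _ := by rw [hβ]
        _ = _ := by rw [assoc]
    refine ⟨T₂, ρ₂ ≫ ρ₁, epi_comp _ _, pullback.lift (ρ₂ ≫ ρ₁ ≫ y ≫ π₂ (m + 1)) β hzc, ?_⟩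
    apply Khom_ext
    · simp only [assoc, hy1, comp_zero, dK_fst]
    · simp only [assoc, dK_snd, liftK_fst]
  have hKCacyclic : AcyclicCx KC := by
    intro n
    rw [KC.exactAt_iff' (n + 1) n (n - 1) ((ComplexShape.down ℤ).prev_eq' (by simp))
      ((ComplexShape.down ℤ).next_eq' (by simp))]
    rw [ShortComplex.exact_iff_exact_up_to_refinements]
    intro T x hx
    have hn : n = n - 1 + 1 := by omega
    have hx' : (x ≫ eqToHom (congrArg K hn)) ≫ dK (n - 1) = 0 := by
      have hx0 : x ≫ KC.d n (n - 1) = 0 := hx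
      rw [KCd_eq (n - 1) n hn.symm] at hx0
      rwa [assoc]
    obtain ⟨T', ρ, hρ, z, hz⟩ := chase (n - 1) T (x ≫ eqToHom (congrArg K hn)) hx'
    refine ⟨T', ρ, hρ, z ≫ eqToHom (congrArg K (show n - 1 + 1 + 1 = n + 1 by omega)), ?_⟩
    have hdKcongr : ∀ (a b : ℤ) (h : a = b),
        dK a ≫ eqToHom (congrArg K h) = eqToHom (congrArg K (show a + 1 = b + 1 by rw [h])) ≫ dK b := by
      rintro a b rfl; simp
    show ρ ≫ x = _ ≫ KC.d (n + 1) n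
    rw [KCd_eq n (n + 1) rfl]
    simp only [eqToHom_refl, id_comp]
    have := hz =≫ eqToHom (congrArg K hn.symm)
    have hcancel : ∀ {Y : A} (y : Y ⟶ K n),
        y ≫ eqToHom (congrArg K hn) ≫ eqToHom (congrArg K hn.symm) = y := by
      intro Y y; simp
    rw [assoc, assoc] at this
    erw [hcancel x] at this
    erw [this]
    rw [assoc, hdKcongr (n - 1 + 1) n hn.symm]
    exact (assoc _ _ _).symm
  -- the cycles of `KC` lie in `𝒵`
  have hKCcyc : ∀ n : ℤ, kernel (KC.d n (n - 1)) ∈ 𝒵 := by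
    intro n
    have hn : n = n - 1 + 1 := by omega
    let eC : CC (n + 1) ⟶ K n := pullback.lift 0 (κκ (n + 1))
      (by rw [zero_comp, ← assoc, ww (n + 1), zero_comp])
    have heC1 : eC ≫ π₁ n = 0 := pullback.lift_fst _ _ _
    have heC2 : eC ≫ π₂ n = κκ (n + 1) := pullback.lift_snd _ _ _
    have heCd : eC ≫ KC.d n (n - 1) = 0 := by
      rw [KCd_eq (n - 1) n hn.symm]
      rw [← assoc]
      apply Khom_ext
      · rw [assoc, dK_fst, comp_zero, zero_comp]
      · rw [assoc, dK_snd, assoc, π₁congr n (n - 1 + 1) hn, ← assoc, heC1, zero_comp, zero_comp]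
    let φ : CC (n + 1) ⟶ kernel (KC.d n (n - 1)) := kernel.lift _ eC heCd
    have hφι : φ ≫ kernel.ι _ = eC := kernel.lift_ι _ _ _
    have hk1 : kernel.ι (KC.d n (n - 1)) ≫ π₁ n = 0 := by
      have h0 : (kernel.ι (KC.d n (n - 1)) ≫ eqToHom (congrArg K hn)) ≫ dK (n - 1) = 0 := by
        rw [assoc, ← KCd_eq (n - 1) n hn.symm]
        exact kernel.condition _
      have h1 := h0 =≫ π₂ (n - 1)
      rw [assoc, dK_snd, zero_comp, assoc, π₁congr n (n - 1 + 1) hn, ← assoc] at h1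
      have h2 := h1 =≫ eqToHom (congrArg FF hn.symm)
      rwa [assoc, eqToHom_trans, eqToHom_refl, comp_id, zero_comp] at h2
    have hk2 : (kernel.ι (KC.d n (n - 1)) ≫ π₂ n) ≫ qq (n + 1) = 0 := by
      have h0 := kernel.ι (KC.d n (n - 1)) ≫= cond n
      rw [← assoc, hk1, zero_comp] at h0
      rw [← cancel_mono (kernel.ι (E.d (n + 1) (n + 1 - 1))), zero_comp, assoc, assoc]
      exact h0.symm
    haveI : Mono (κκ (n + 1)) := (hse (n + 1)).mono_f
    let χ : kernel (KC.d n (n - 1)) ⟶ CC (n + 1) :=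
      (hse (n + 1)).exact.lift (kernel.ι (KC.d n (n - 1)) ≫ π₂ n) hk2
    have hχ : χ ≫ κκ (n + 1) = kernel.ι (KC.d n (n - 1)) ≫ π₂ n :=
      ShortComplex.Exact.lift_f _ _ _
    refine memZ_of_iso pair1 ⟨φ, χ, ?_, ?_⟩ (hC (n + 1))
    · rw [← cancel_mono (κκ (n + 1)), assoc, hχ, ← assoc, hφι, heC2, id_comp]
    · rw [← cancel_mono (kernel.ι (KC.d n (n - 1))), assoc, hφι, id_comp]
      apply Khom_ext
      · rw [assoc, heC1, comp_zero, hk1]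
      · rw [assoc, heC2, hχ]
  have hKCZ : KC ∈ Ztilde 𝒵 := ⟨hKCacyclic, hKCcyc⟩
  -- now resolve `f` degreewise
  have cycA : ∀ j : ℤ, ∃ cA : G.X (j + 1) ⟶ kernel (E.d j (j - 1)),
      cA ≫ kernel.ι _ = f.f (j + 1) ≫ E.d (j + 1) j :=
    fun j => ⟨kernel.lift _ (f.f (j + 1) ≫ E.d (j + 1) j)
      (by rw [assoc, HomologicalComplex.d_comp_d, comp_zero]), kernel.lift_ι _ _ _⟩
  choose cA hcA using cycA
  have hA0 : ∀ j : ℤ, ∃ a : G.X (j + 1) ⟶ FF j, a ≫ qq j = cA j :=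
    fun j => lift_of_ext1Vanish (hse j) ((pair1.1 _).mp (hG (j + 1)) _ (hC j)) _
  choose AA hAA using hA0
  have hres : ∀ (j t : ℤ), (f.f (j + 1) - AA j ≫ rr j) ≫ E.d (j + 1) t = 0 := by
    intro j t
    by_cases h : t = j
    · subst h
      rw [Preadditive.sub_comp, assoc, hrr, ← assoc, hAA, hcA, sub_self]
    · rw [E.shape _ t (by simp only [ComplexShape.down_Rel]; omega), comp_zero]
  have hB0 : ∀ j : ℤ, ∃ b : G.X (j + 1) ⟶ FF (j + 1),
      b ≫ qq (j + 1) = kernel.lift (E.d (j + 1) (j + 1 - 1)) (f.f (j + 1) - AA j ≫ rr j) (hres j _) :=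
    fun j => lift_of_ext1Vanish (hse (j + 1)) ((pair1.1 _).mp (hG (j + 1)) _ (hC (j + 1))) _
  choose BB hBB using hB0
  have KeyB : ∀ j : ℤ, f.f (j + 1)
      = AA j ≫ rr j + BB j ≫ (qq (j + 1) ≫ kernel.ι (E.d (j + 1) (j + 1 - 1))) := by
    intro j
    have := (hBB j) =≫ kernel.ι (E.d (j + 1) (j + 1 - 1))
    rw [assoc, kernel.lift_ι] at this
    rw [this]
    abel
  -- the obstruction chain map into `KC`
  have Tcond : ∀ j : ℤ, (G.d (j + 1 + 1) (j + 1) ≫ AA j) ≫ rr j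
      = (AA (j + 1) - G.d (j + 1 + 1) (j + 1) ≫ BB j)
        ≫ (qq (j + 1) ≫ kernel.ι (E.d (j + 1) (j + 1 - 1))) := by
    intro j
    have hAr : AA j ≫ rr j
        = f.f (j + 1) - BB j ≫ (qq (j + 1) ≫ kernel.ι (E.d (j + 1) (j + 1 - 1))) := by
      rw [KeyB j]; abel
    rw [Preadditive.sub_comp, assoc, hAr, Preadditive.comp_sub]
    have h1 : AA (j + 1) ≫ qq (j + 1) ≫ kernel.ι (E.d (j + 1) (j + 1 - 1))
        = f.f (j + 1 + 1) ≫ E.d (j + 1 + 1) (j + 1) := by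
      rw [← assoc, hAA, hcA]
    rw [h1, f.comm]
    simp only [assoc]
  let TT : ∀ j : ℤ, G.X (j + 1 + 1) ⟶ K j :=
    fun j => pullback.lift (G.d (j + 1 + 1) (j + 1) ≫ AA j)
      (AA (j + 1) - G.d (j + 1 + 1) (j + 1) ≫ BB j) (Tcond j)
  have TT_fst : ∀ j, TT j ≫ π₁ j = G.d (j + 1 + 1) (j + 1) ≫ AA j :=
    fun j => pullback.lift_fst _ _ _
  have TT_snd : ∀ j, TT j ≫ π₂ j = AA (j + 1) - G.d (j + 1 + 1) (j + 1) ≫ BB j :=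
    fun j => pullback.lift_snd _ _ _
  -- the shifted complex `GS`
  let GS : Cx A :=
    { X := fun j => G.X (j + 1 + 1)
      d := fun i j => G.d (i + 1 + 1) (j + 1 + 1)
      shape := fun i j hij => G.shape _ _
        (by simp only [ComplexShape.down_Rel] at hij ⊢; omega)
      d_comp_d' := fun i j k _ _ => G.d_comp_d _ _ _ }
  let Tchain : GS ⟶ KC :=
    { f := TT
      comm' := by
        rintro i j hij
        simp only [ComplexShape.down_Rel] at hij
        subst hij
        show TT (j + 1) ≫ KC.d (j + 1) j = G.d (j + 1 + 1 + 1) (j + 1 + 1) ≫ TT j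
        rw [KC_d]
        apply Khom_ext
        · rw [assoc, dK_fst, comp_zero, assoc, TT_fst, ← assoc, G.d_comp_d, zero_comp]
        · rw [assoc, dK_snd, TT_fst, assoc, TT_snd, Preadditive.comp_sub, ← assoc,
            G.d_comp_d, zero_comp, sub_zero] }
  have hGSdw : GS ∈ dwX 𝒳 := fun n => hG _
  have hGSdg : GS ∈ dgXZ 𝒳 𝒵 := by rw [hyp]; exact hGSdw
  obtain ⟨ho⟩ := hGSdg.2 KC hKCZ Tchain
  -- extract the homotopy components
  have COMM : ∀ (i j : ℤ), j + 1 = i →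
      TT i = G.d (i + 1 + 1) (j + 1 + 1) ≫ ho.hom j i + ho.hom i (i + 1) ≫ dK i := by
    intro i j hij
    have hcm := ho.comm i
    rw [dNext_eq ho.hom (show (ComplexShape.down ℤ).Rel i j by simpa [ComplexShape.down_Rel])] at hcm
    rw [prevD_eq ho.hom (show (ComplexShape.down ℤ).Rel (i + 1) i by simp)] at hcm
    have h0 : (0 : GS ⟶ KC).f i = 0 := rfl
    rw [h0, add_zero] at hcm
    rw [KC_d] at hcm
    exact hcm
  -- transport helpers for `G`
  have d_eqToHomG : ∀ (i a b : ℤ) (h : a = b),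
      G.d i a ≫ eqToHom (congrArg G.X h) = G.d i b := by
    rintro i a b rfl; simp
  have homCongr : ∀ (a b c : ℤ) (h : a = b),
      eqToHom (congrArg G.X (show a + 1 + 1 = b + 1 + 1 by rw [h])) ≫ ho.hom b c
        = ho.hom a c := by
    rintro a b c rfl; simp
  -- corrected lifts
  let χ : ∀ j : ℤ, G.X (j + 1) ⟶ K j :=
    fun j => eqToHom (congrArg G.X (show j + 1 = j - 1 + 1 + 1 by omega)) ≫ ho.hom (j - 1) j
  let Ah : ∀ j : ℤ, G.X (j + 1) ⟶ FF j := fun j => AA j - χ j ≫ π₁ j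
  let Bh : ∀ j : ℤ, G.X (j + 1) ⟶ FF (j + 1) := fun j => BB j + χ j ≫ π₂ j
  have KeyI : ∀ j : ℤ, f.f (j + 1)
      = Ah j ≫ rr j + Bh j ≫ (qq (j + 1) ≫ kernel.ι (E.d (j + 1) (j + 1 - 1))) := by
    intro j
    show f.f (j + 1) = (AA j - χ j ≫ π₁ j) ≫ rr j
      + (BB j + χ j ≫ π₂ j) ≫ (qq (j + 1) ≫ kernel.ι (E.d (j + 1) (j + 1 - 1)))
    have e1 : (χ j ≫ π₁ j) ≫ rr j
        = (χ j ≫ π₂ j) ≫ (qq (j + 1) ≫ kernel.ι (E.d (j + 1) (j + 1 - 1))) := by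
      rw [assoc (χ j) (π₁ j) (rr j), cond j]
      exact (assoc (χ j) (π₂ j) _).symm
    rw [Preadditive.sub_comp, Preadditive.add_comp, e1, KeyB j, sub_add_add_cancel]
  have χS : ∀ j : ℤ, χ (j + 1) = ho.hom j (j + 1) := by
    intro j
    show eqToHom _ ≫ ho.hom (j + 1 - 1) (j + 1) = ho.hom j (j + 1)
    exact homCongr j (j + 1 - 1) (j + 1) (by omega)
  have KeyII : ∀ j : ℤ, Ah (j + 1) = G.d (j + 1 + 1) (j + 1) ≫ Bh j := by
    intro j
    have hE2 := (COMM j (j - 1) (by omega)) =≫ π₂ j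
    rw [TT_snd, Preadditive.add_comp, assoc, assoc, dK_snd] at hE2
    have hbr : G.d (j + 1 + 1) (j + 1) ≫ χ j
        = G.d (j + 1 + 1) (j - 1 + 1 + 1) ≫ ho.hom (j - 1) j := by
      show G.d (j + 1 + 1) (j + 1) ≫ eqToHom _ ≫ ho.hom (j - 1) j = _
      rw [← assoc, d_eqToHomG (j + 1 + 1) (j + 1) (j - 1 + 1 + 1) (by omega)]
    show AA (j + 1) - χ (j + 1) ≫ π₁ (j + 1) = G.d (j + 1 + 1) (j + 1) ≫ (BB j + χ j ≫ π₂ j)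
    rw [χS j, Preadditive.comp_add, ← assoc, hbr, assoc]
    rw [sub_eq_iff_eq_add] at hE2
    rw [hE2]
    abel
  -- assemble the homotopy
  let Sedge : ∀ j : ℤ, G.X (j + 1) ⟶ E.X (j + 1 + 1) := fun j => Bh j ≫ rr (j + 1)
  let SS : ∀ i : ℤ, G.X i ⟶ E.X (i + 1) := fun i =>
    eqToHom (congrArg G.X (show i = i - 1 + 1 by omega)) ≫ Sedge (i - 1)
      ≫ eqToHom (congrArg E.X (show i - 1 + 1 + 1 = i + 1 by omega))
  have SedgeCongr : ∀ (a b : ℤ) (h : a = b),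
      eqToHom (congrArg G.X (show a + 1 = b + 1 by rw [h])) ≫ Sedge b
        ≫ eqToHom (congrArg E.X (show b + 1 + 1 = a + 1 + 1 by rw [h])) = Sedge a := by
    rintro a b rfl; simp
  have SS_eq : ∀ j : ℤ, SS (j + 1) = Sedge j := by
    intro j
    show eqToHom _ ≫ Sedge (j + 1 - 1) ≫ eqToHom _ = Sedge j
    exact SedgeCongr j (j + 1 - 1) (by omega)
  have ArCongr : ∀ (a b : ℤ) (h : a = b),
      eqToHom (congrArg G.X (show a + 1 = b + 1 by rw [h])) ≫ Ah b ≫ rr b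
        ≫ eqToHom (congrArg E.X (show b + 1 = a + 1 by rw [h])) = Ah a ≫ rr a := by
    rintro a b rfl; simp
  refine ⟨⟨fun i j => if h : j = i + 1 then SS i ≫ eqToHom (congrArg E.X h.symm) else 0,
    ?_, ?_⟩⟩
  · intro i j hn
    exact dif_neg (by simp only [ComplexShape.down_Rel] at hn; omega)
  · intro i
    obtain ⟨j, rfl⟩ : ∃ j, i = j + 1 := ⟨i - 1, by omega⟩
    rw [dNext_eq _ (show (ComplexShape.down ℤ).Rel (j + 1) j by simp)]
    rw [prevD_eq _ (show (ComplexShape.down ℤ).Rel (j + 1 + 1) (j + 1) by simp)]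
    have h1 : (if h : j + 1 = j + 1 then SS j ≫ eqToHom (congrArg E.X h.symm) else 0) = SS j := by
      rw [dif_pos rfl]; simp
    have h2 : (if h : j + 1 + 1 = j + 1 + 1 then SS (j + 1) ≫ eqToHom (congrArg E.X h.symm) else 0)
        = Sedge j := by
      rw [dif_pos rfl]; simp [SS_eq j]
    show f.f (j + 1) = G.d (j + 1) j ≫ _ + _ ≫ E.d (j + 1 + 1) (j + 1) + (0 : G ⟶ E).f (j + 1)
    rw [h1, h2]
    have hzero : (0 : G ⟶ E).f (j + 1) = 0 := rfl
    rw [hzero, add_zero]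
    -- compute the two terms
    have term2 : Sedge j ≫ E.d (j + 1 + 1) (j + 1)
        = Bh j ≫ (qq (j + 1) ≫ kernel.ι (E.d (j + 1) (j + 1 - 1))) := by
      show (Bh j ≫ rr (j + 1)) ≫ E.d (j + 1 + 1) (j + 1) = _
      rw [assoc, hrr (j + 1)]
    have term1 : G.d (j + 1) j ≫ SS j = Ah j ≫ rr j := by
      show G.d (j + 1) j ≫ eqToHom _ ≫ Sedge (j - 1) ≫ eqToHom _ = _
      rw [← assoc, d_eqToHomG (j + 1) j (j - 1 + 1) (by omega)]
      have hd : G.d (j + 1) (j - 1 + 1)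
          = eqToHom (congrArg G.X (show j + 1 = j - 1 + 1 + 1 by omega))
            ≫ G.d (j - 1 + 1 + 1) (j - 1 + 1) := by
        have hgen : ∀ (a b : ℤ) (h : a = b), G.d a (j - 1 + 1)
            = eqToHom (congrArg G.X h) ≫ G.d b (j - 1 + 1) := by rintro a b rfl; simp
        exact hgen (j + 1) (j - 1 + 1 + 1) (by omega)
      have hstep : G.d (j - 1 + 1 + 1) (j - 1 + 1) ≫ Sedge (j - 1)
          = Ah (j - 1 + 1) ≫ rr (j - 1 + 1) := by
        show G.d (j - 1 + 1 + 1) (j - 1 + 1) ≫ Bh (j - 1) ≫ rr (j - 1 + 1) = _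
        rw [← assoc, ← KeyII (j - 1)]
      rw [hd, assoc, ← assoc (G.d (j - 1 + 1 + 1) (j - 1 + 1)) (Sedge (j - 1)) (eqToHom _),
        hstep]
      simp only [assoc]
      exact ArCongr j (j - 1 + 1) (by omega)
    rw [term1, term2]
    exact KeyI j

/-- For a complete hereditary cotorsion triple `(𝒳, 𝒵, 𝒴)` in a
Grothendieck category, `dg X̃ = E-dw X̃` iff `E-dg X̃ = E-dw X̃`. -/
theorem stmt_19 [HasColimits A] [AB5 A] [HasSeparator A]
    (𝒳 𝒵 𝒴 : Set A) (ht : CotorsionTriple 𝒳 𝒵 𝒴) :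
    dgXZ 𝒳 𝒵 = dwX 𝒳 ↔ EdgX 𝒳 = dwX 𝒳 := by
  constructor
  · intro hyp
    apply Set.Subset.antisymm
    · exact fun G hG => hG.1
    · intro G hG
      exact ⟨hG, fun E hE f => forward_null ht hyp hG hE f⟩
  · intro hyp
    apply Set.Subset.antisymm
    · exact fun G hG => hG.1
    · intro G hG
      have hG' : G ∈ EdgX 𝒳 := hyp ▸ hG
      exact ⟨hG, fun Z hZ f => hG'.2 Z (ztilde_subset_etilde ht.1 hZ) f⟩

end Paper
end
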